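/- For two opposite strong opinions performing their joint dynamics X on a connected graph G on N vertices, the meeting time satisfies M_X(G) = max_{x,y} M_X(x,y) < 4·H_{P^B}(G), where H_{P^B}(G) is the maximum hitting time of the biased random walk. -/

import Mathlib

open Finset

/-- Transition matrix of the biased random walk `X_B` on a graph `G` on `N` vertices:
`P^B_{ij} = (1/N)(1/|N_i| + 1/|N_j|)` for edges, `P^B_{ii} = 1 - Σ_{k ∈ N_i} P^B_{ik}`,
and `0` otherwise. -/
noncomputable def PB (N : ℕ) (G : SimpleGraph (Fin N)) [DecidableRel G.Adj] (i j : Fin N) : ℝ :=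
  if G.Adj i j then (1 / (N : ℝ)) * (1 / (G.degree i : ℝ) + 1 / (G.degree j : ℝ))
  else if i = j then
    1 - ∑ k ∈ G.neighborFinset i,
      (1 / (N : ℝ)) * (1 / (G.degree i : ℝ) + 1 / (G.degree k : ℝ))
  else 0

/-- `H` is the vector of expected hitting times of the Markov chain with transition
matrix `P^B` on the vertices of `G`: `H i j` is the expected number of steps a walk
started at `i` takes to first reach `j`, characterized by the first-step equations. -/
def IsHittingTime (N : ℕ) (G : SimpleGraph (Fin N)) [DecidableRel G.Adj]
    (H : Fin N → Fin N → ℝ) : Prop :=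
  (∀ y, H y y = 0) ∧
  ∀ x y, x ≠ y → H x y = 1 + ∑ k : Fin N, PB N G x k * H k y

/-- Total probability that the biased walk at `x` moves (to some neighbor). -/
noncomputable def PBsum (N : ℕ) (G : SimpleGraph (Fin N)) [DecidableRel G.Adj]
    (x : Fin N) : ℝ :=
  ∑ i ∈ G.neighborFinset x, PB N G x i

/-- `M` is the vector of expected meeting times of the joint process `X` of two opposite
strong opinions at `x` and `y`: if `x ∉ N_y`, exactly one walker moves at a time (each
single move having probability `P^B`), and both stay with probability
`1 - Σ_{i∈N_x}P^B_{xi} - Σ_{j∈N_y}P^B_{yj}`; if `x ∈ N_y`, additionally the walkers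
swap positions through the common edge (which counts as meeting) with probability
`P^B_{xy}`, and both stay with probability
`1 - Σ_{i∈N_x}P^B_{xi} - Σ_{j∈N_y}P^B_{yj} + P^B_{xy}`. -/
def IsMeetingTimeX (N : ℕ) (G : SimpleGraph (Fin N)) [DecidableRel G.Adj]
    (M : Fin N → Fin N → ℝ) : Prop :=
  (∀ x, M x x = 0) ∧
  (∀ x y, x ≠ y → ¬ G.Adj x y →
    M x y = 1 + (∑ i ∈ G.neighborFinset x, PB N G x i * M i y)
      + (∑ j ∈ G.neighborFinset y, PB N G y j * M x j)
      + (1 - PBsum N G x - PBsum N G y) * M x y) ∧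
  (∀ x y, G.Adj x y →
    M x y = 1 + (∑ i ∈ (G.neighborFinset x).erase y, PB N G x i * M i y)
      + (∑ j ∈ (G.neighborFinset y).erase x, PB N G y j * M x j)
      + (1 - PBsum N G x - PBsum N G y + PB N G x y) * M x y)

/-- `M` is the vector of expected meeting times of the coupled process `X'` of two
walkers at `x` and `y`: exactly one walker moves at a time (each single move having
probability `P^B`); if `x ∈ N_y` the walkers meet (at `x` or at `y`) with probability
`2·P^B_{xy}`; both walkers stay with probability
`1 - Σ_{i∈N_x}P^B_{xi} - Σ_{j∈N_y}P^B_{yj}`. -/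
def IsMeetingTimeX' (N : ℕ) (G : SimpleGraph (Fin N)) [DecidableRel G.Adj]
    (M : Fin N → Fin N → ℝ) : Prop :=
  (∀ x, M x x = 0) ∧
  (∀ x y, x ≠ y → ¬ G.Adj x y →
    M x y = 1 + (∑ i ∈ G.neighborFinset x, PB N G x i * M i y)
      + (∑ j ∈ G.neighborFinset y, PB N G y j * M x j)
      + (1 - PBsum N G x - PBsum N G y) * M x y) ∧
  (∀ x y, G.Adj x y →
    M x y = 1 + (∑ i ∈ (G.neighborFinset x).erase y, PB N G x i * M i y)
      + (∑ j ∈ (G.neighborFinset y).erase x, PB N G y j * M x j)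
      + (1 - PBsum N G x - PBsum N G y) * M x y)


section aux
variable {N : ℕ} {G : SimpleGraph (Fin N)} [DecidableRel G.Adj]

lemma PB_adj {i j : Fin N} (h : G.Adj i j) :
    PB N G i j = (1 / (N : ℝ)) * (1 / (G.degree i : ℝ) + 1 / (G.degree j : ℝ)) := by
  simp [PB, h]

lemma PB_symm (i j : Fin N) : PB N G i j = PB N G j i := by
  unfold PB
  by_cases h : G.Adj i j
  · simp [h, h.symm, add_comm]
  · have h' : ¬ G.Adj j i := fun hh => h hh.symm
    by_cases hij : i = j
    · subst hij; simp
    · simp [h, h', hij, Ne.symm hij]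

lemma PB_self (x : Fin N) : PB N G x x = 1 - PBsum N G x := by
  have h1 : PB N G x x = 1 - ∑ k ∈ G.neighborFinset x,
      (1 / (N : ℝ)) * (1 / (G.degree x : ℝ) + 1 / (G.degree k : ℝ)) := by
    simp [PB]
  rw [h1]
  congr 1
  unfold PBsum
  exact (Finset.sum_congr rfl fun k hk =>
    PB_adj (by rwa [SimpleGraph.mem_neighborFinset] at hk)).symm

lemma PB_off {i j : Fin N} (h : ¬ G.Adj i j) (h2 : i ≠ j) : PB N G i j = 0 := by
  simp [PB, h, h2]

lemma deg_pos {i j : Fin N} (h : G.Adj i j) : 0 < G.degree i := by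
  rw [← SimpleGraph.card_neighborFinset_eq_degree]
  exact Finset.card_pos.mpr ⟨j, by rwa [SimpleGraph.mem_neighborFinset]⟩

lemma PB_pos (hN : 2 ≤ N) {i j : Fin N} (h : G.Adj i j) : 0 < PB N G i j := by
  rw [PB_adj h]
  have h1 : (0:ℝ) < N := by exact_mod_cast (by omega : 0 < N)
  have h2 : (0:ℝ) < (G.degree i : ℝ) := by exact_mod_cast deg_pos h
  have h3 : (0:ℝ) < (G.degree j : ℝ) := by exact_mod_cast deg_pos h.symm
  positivity

lemma PBsum_le_one (hN : 2 ≤ N) (x : Fin N) : PBsum N G x ≤ 1 := by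
  have hNpos : (0:ℝ) < N := by exact_mod_cast (by omega : 0 < N)
  have hdx0 : (0:ℝ) ≤ (G.degree x : ℝ) := by positivity
  have hbound : ∀ k ∈ G.neighborFinset x,
      PB N G x k ≤ 1/(N:ℝ) * (1/(G.degree x:ℝ)) + 1/(N:ℝ) := by
    intro k hk
    rw [SimpleGraph.mem_neighborFinset] at hk
    rw [PB_adj hk]
    have h1 : (1:ℝ) ≤ (G.degree k : ℝ) := by exact_mod_cast deg_pos hk.symm
    have h2 : 1/(G.degree k:ℝ) ≤ 1 := by
      rw [div_le_one (by linarith)]; exact h1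
    have h3 : (0:ℝ) ≤ 1/(N:ℝ) := by positivity
    have h4 : (0:ℝ) ≤ 1/(G.degree x:ℝ) := by positivity
    calc 1/(N:ℝ) * (1/(G.degree x:ℝ) + 1/(G.degree k:ℝ))
        ≤ 1/(N:ℝ) * (1/(G.degree x:ℝ) + 1) := by nlinarith
      _ = 1/(N:ℝ) * (1/(G.degree x:ℝ)) + 1/(N:ℝ) := by ring
  have h5 := Finset.sum_le_sum hbound
  rw [Finset.sum_const, SimpleGraph.card_neighborFinset_eq_degree, nsmul_eq_mul] at h5
  have hdd : (G.degree x : ℝ) * (1/(G.degree x:ℝ)) ≤ 1 := by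
    rcases Nat.eq_zero_or_pos (G.degree x) with h | h
    · simp [h]
    · have : (0:ℝ) < (G.degree x:ℝ) := by exact_mod_cast h
      rw [mul_one_div, div_self (ne_of_gt this)]
  have hdN : (G.degree x : ℝ) ≤ (N:ℝ) - 1 := by
    have h := G.degree_lt_card_verts x
    rw [Fintype.card_fin] at h
    have h' : G.degree x + 1 ≤ N := h
    have h'' : (G.degree x : ℝ) + 1 ≤ (N:ℝ) := by exact_mod_cast h'
    linarith
  calc PBsum N G x ≤ (G.degree x:ℝ) * (1/(N:ℝ) * (1/(G.degree x:ℝ)) + 1/(N:ℝ)) := h5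
    _ = (1/(N:ℝ)) * ((G.degree x:ℝ) * (1/(G.degree x:ℝ))) + (G.degree x:ℝ)/(N:ℝ) := by ring
    _ ≤ (1/(N:ℝ)) * 1 + ((N:ℝ)-1)/(N:ℝ) := by
        have h6 : (0:ℝ) ≤ 1/(N:ℝ) := by positivity
        have h7 : (G.degree x:ℝ)/(N:ℝ) ≤ ((N:ℝ)-1)/(N:ℝ) := by gcongr
        nlinarith
    _ = 1 := by field_simp; ring

lemma PB_nonneg (hN : 2 ≤ N) (i j : Fin N) : 0 ≤ PB N G i j := by
  by_cases h : G.Adj i j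
  · exact le_of_lt (PB_pos hN h)
  · by_cases h2 : i = j
    · subst h2; rw [PB_self]; linarith [PBsum_le_one (G := G) hN i]
    · rw [PB_off h h2]

end aux


section aux2
variable {N : ℕ} {G : SimpleGraph (Fin N)} [DecidableRel G.Adj]

lemma sum_PB_mul (z : Fin N) (f : Fin N → ℝ) :
    ∑ k, PB N G z k * f k
      = (1 - PBsum N G z) * f z + ∑ k ∈ G.neighborFinset z, PB N G z k * f k := by
  have hz : z ∉ G.neighborFinset z := by simp
  have hsub : insert z (G.neighborFinset z) ⊆ univ := subset_univ _
  have hzero : ∀ k ∈ (univ : Finset (Fin N)), k ∉ insert z (G.neighborFinset z) →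
      PB N G z k * f k = 0 := by
    intro k _ hk
    have h1 : ¬ G.Adj z k := fun hh =>
      hk (Finset.mem_insert_of_mem (by rwa [SimpleGraph.mem_neighborFinset]))
    have h2 : z ≠ k := fun hh => hk (by rw [← hh]; exact Finset.mem_insert_self _ _)
    rw [PB_off h1 h2, zero_mul]
  rw [← Finset.sum_subset hsub hzero, Finset.sum_insert hz, PB_self]

lemma sum_PB_row (z : Fin N) : ∑ k, PB N G z k = 1 := by
  have h := sum_PB_mul (G := G) z (fun _ => 1)
  simp only [mul_one] at h
  rw [h]
  have : ∑ k ∈ G.neighborFinset z, PB N G z k = PBsum N G z := rfl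
  rw [this]; ring

lemma sum_PB_col (k : Fin N) : ∑ z, PB N G z k = 1 := by
  rw [Finset.sum_congr rfl fun z _ => PB_symm z k]
  exact sum_PB_row k

variable {H : Fin N → Fin N → ℝ}

lemma H_nonneg (hN : 2 ≤ N) (hH : IsHittingTime N G H) : ∀ z y, 0 ≤ H z y := by
  intro z y
  obtain ⟨a, _, hmin⟩ := Finset.exists_min_image (univ : Finset (Fin N))
    (fun k => H k y) ⟨z, mem_univ z⟩
  by_contra hneg
  push_neg at hneg
  have hay : H a y < 0 := lt_of_le_of_lt (hmin z (mem_univ z)) hneg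
  have hane : a ≠ y := by
    rintro rfl
    rw [hH.1] at hay
    exact lt_irrefl 0 hay
  have heq := hH.2 a y hane
  have hbound : ∑ k, PB N G a k * H a y ≤ ∑ k, PB N G a k * H k y :=
    Finset.sum_le_sum fun k _ =>
      mul_le_mul_of_nonneg_left (hmin k (mem_univ k)) (PB_nonneg hN a k)
  rw [← Finset.sum_mul, sum_PB_row, one_mul] at hbound
  linarith

lemma Lval (hN : 2 ≤ N) (hH : IsHittingTime N G H) (z y : Fin N) :
    ∑ k, PB N G z k * H k y = H z y - 1 + (if z = y then (N:ℝ) else 0) := by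
  by_cases hzy : z = y
  · subst hzy
    rw [if_pos rfl, hH.1]
    have hT : ∑ z', ∑ k, PB N G z' k * H k z = ∑ k, H k z := by
      rw [Finset.sum_comm]
      refine Finset.sum_congr rfl fun k _ => ?_
      rw [← Finset.sum_mul, sum_PB_col, one_mul]
    have hsplit : ∑ z', ∑ k, PB N G z' k * H k z
        = (∑ z' ∈ univ.erase z, (H z' z - 1)) + ∑ k, PB N G z k * H k z := by
      rw [← Finset.sum_erase_add univ _ (mem_univ z)]
      congr 1
      refine Finset.sum_congr rfl fun z' hz' => ?_
      have hne : z' ≠ z := Finset.ne_of_mem_erase hz'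
      have := hH.2 z' z hne
      linarith
    have hcard : ((univ : Finset (Fin N)).erase z).card = N - 1 := by
      rw [Finset.card_erase_of_mem (mem_univ z), Finset.card_univ, Fintype.card_fin]
    have herase1 : ∑ z' ∈ univ.erase z, (H z' z - 1)
        = (∑ z' ∈ univ.erase z, H z' z) - ((N:ℝ) - 1) := by
      rw [Finset.sum_sub_distrib, Finset.sum_const, hcard, nsmul_eq_mul, mul_one]
      have : ((N - 1 : ℕ) : ℝ) = (N:ℝ) - 1 := by
        have : (1:ℕ) ≤ N := by omega
        push_cast [Nat.cast_sub this]
        ring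
      rw [this]
    have herase2 : ∑ z' ∈ univ.erase z, H z' z = ∑ z', H z' z := by
      have := Finset.sum_erase_add univ (fun z' => H z' z) (mem_univ z)
      simp only [hH.1, add_zero] at this
      exact this
    have hss : ∑ k, H k z = ∑ z', H z' z := rfl
    rw [hsplit, herase1, herase2] at hT
    linarith
  · rw [if_neg hzy, add_zero]
    have := hH.2 z y hzy
    linarith

lemma A1 (hN : 2 ≤ N) (hH : IsHittingTime N G H) (x y : Fin N) :
    H x y - (∑ z, H z y) / (N:ℝ) = H y x - (∑ z, H z x) / (N:ℝ) := by
  have hNR : (N:ℝ) ≠ 0 := by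
    have : (0:ℝ) < N := by exact_mod_cast (by omega : 0 < N)
    linarith
  have P1 : ∑ z, H z x * (∑ k, PB N G z k * H k y)
      = (∑ z, (H z x * H z y - H z x)) + (N:ℝ) * H y x := by
    have hpt : ∀ z ∈ (univ : Finset (Fin N)), H z x * (∑ k, PB N G z k * H k y)
        = (H z x * H z y - H z x) + (if z = y then (N:ℝ) * H z x else 0) := by
      intro z _
      rw [Lval hN hH z y]
      split_ifs with h
      · ring
      · ring
    rw [Finset.sum_congr rfl hpt, Finset.sum_add_distrib,
      Finset.sum_ite_eq' univ y (fun z => (N:ℝ) * H z x), if_pos (mem_univ y)]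
  have P2 : ∑ z, H z y * (∑ k, PB N G z k * H k x)
      = (∑ z, (H z y * H z x - H z y)) + (N:ℝ) * H x y := by
    have hpt : ∀ z ∈ (univ : Finset (Fin N)), H z y * (∑ k, PB N G z k * H k x)
        = (H z y * H z x - H z y) + (if z = x then (N:ℝ) * H z y else 0) := by
      intro z _
      rw [Lval hN hH z x]
      split_ifs with h
      · ring
      · ring
    rw [Finset.sum_congr rfl hpt, Finset.sum_add_distrib,
      Finset.sum_ite_eq' univ x (fun z => (N:ℝ) * H z y), if_pos (mem_univ x)]
  have hswap : ∑ z, H z x * (∑ k, PB N G z k * H k y)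
      = ∑ z, H z y * (∑ k, PB N G z k * H k x) := by
    simp_rw [Finset.mul_sum]
    rw [Finset.sum_comm]
    refine Finset.sum_congr rfl fun a _ => Finset.sum_congr rfl fun b _ => ?_
    rw [PB_symm b a]
    ring
  have hprod : ∑ z, (H z x * H z y - H z x) = (∑ z, H z x * H z y) - ∑ z, H z x :=
    Finset.sum_sub_distrib _ _
  have hprod2 : ∑ z, (H z y * H z x - H z y) = (∑ z, H z x * H z y) - ∑ z, H z y := by
    rw [Finset.sum_sub_distrib]
    congr 1
    exact Finset.sum_congr rfl fun z _ => mul_comm _ _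
  rw [P1, P2, hprod, hprod2] at hswap
  field_simp
  linarith

end aux2


noncomputable def gg (N : ℕ) (H : Fin N → Fin N → ℝ) (HG : ℝ) (x y : Fin N) : ℝ :=
  HG + (H x y - (∑ z, H z y) / (N : ℝ)) / 2

section aux3
variable {N : ℕ} {G : SimpleGraph (Fin N)} [DecidableRel G.Adj]
variable {H : Fin N → Fin N → ℝ} {HG : ℝ}

lemma gg_symm (hN : 2 ≤ N) (hH : IsHittingTime N G H) (x y : Fin N) :
    gg N H HG x y = gg N H HG y x := by
  unfold gg
  have := A1 (G := G) hN hH x y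
  linarith

lemma E1 (hN : 2 ≤ N) (hH : IsHittingTime N G H) {x y : Fin N} (hxy : x ≠ y) :
    ∑ i ∈ G.neighborFinset x, PB N G x i * H i y = PBsum N G x * H x y - 1 := by
  have h1 := Lval hN hH x y
  rw [if_neg hxy, add_zero] at h1
  have h2 := sum_PB_mul (G := G) x (fun k => H k y)
  try simp only at h2
  rw [h1] at h2
  linarith [h2]
  
lemma sum_nbr_gg (hN : 2 ≤ N) (hH : IsHittingTime N G H) {x y : Fin N} (hxy : x ≠ y) :
    ∑ i ∈ G.neighborFinset x, PB N G x i * gg N H HG i y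
      = PBsum N G x * gg N H HG x y - 1/2 := by
  have hE := E1 hN hH hxy
  have hpt : ∀ i ∈ G.neighborFinset x, PB N G x i * gg N H HG i y
      = PB N G x i * HG + (PB N G x i * H i y) * (1/2)
        + PB N G x i * (-((∑ z, H z y) / (N:ℝ)) / 2) := by
    intro i _
    unfold gg
    ring
  rw [Finset.sum_congr rfl hpt, Finset.sum_add_distrib, Finset.sum_add_distrib,
    ← Finset.sum_mul, ← Finset.sum_mul, ← Finset.sum_mul]
  have hS : ∑ i ∈ G.neighborFinset x, PB N G x i = PBsum N G x := rfl
  rw [hS, hE]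
  unfold gg
  ring

end aux3


set_option maxHeartbeats 1000000 in
/-- For two opposite strong opinions performing their joint dynamics `X`
on a connected graph `G`, the meeting time satisfies
`M_X(G) = max_{x,y} M_X(x,y) < 4·H_{P^B}(G)`, where `H_{P^B}(G)` is the maximum
hitting time of the biased random walk. -/
theorem meeting_time_lt_four_hitting (N : ℕ) (hN : 2 ≤ N) (G : SimpleGraph (Fin N))
    [DecidableRel G.Adj] (hG : G.Connected) (H : Fin N → Fin N → ℝ)
    (hH : IsHittingTime N G H) (HG : ℝ)
    (hHG : IsGreatest {h : ℝ | ∃ a b : Fin N, h = H a b} HG)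
    (M : Fin N → Fin N → ℝ) (hM : IsMeetingTimeX N G M) :
    ∀ x y : Fin N, M x y < 4 * HG := by
  intro x y
  classical
  obtain ⟨hMdiag, hMnon, hMadj⟩ := hM
  have hH0 : ∀ z w, 0 ≤ H z w := H_nonneg hN hH
  have hHle : ∀ a b, H a b ≤ HG := fun a b => hHG.2 ⟨a, b, rfl⟩
  have hNR : (0:ℝ) < (N:ℝ) := by exact_mod_cast (by omega : 0 < N)
  have hHG1 : 1 ≤ HG := by
    have hne01 : (⟨0, by omega⟩ : Fin N) ≠ (⟨1, by omega⟩ : Fin N) := by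
      simp [Fin.ext_iff]
    have heq := hH.2 _ _ hne01
    have hsum : 0 ≤ ∑ k, PB N G (⟨0, by omega⟩ : Fin N) k * H k (⟨1, by omega⟩ : Fin N) :=
      Finset.sum_nonneg fun k _ => mul_nonneg (PB_nonneg hN _ _) (hH0 _ _)
    have := hHle (⟨0, by omega⟩ : Fin N) (⟨1, by omega⟩ : Fin N)
    linarith
  have hBy0 : ∀ b : Fin N, 0 ≤ (∑ z, H z b) / (N:ℝ) := fun b =>
    div_nonneg (Finset.sum_nonneg fun z _ => hH0 z b) (le_of_lt hNR)
  have hByle : ∀ b : Fin N, (∑ z, H z b) / (N:ℝ) ≤ HG := by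
    intro b
    rw [div_le_iff₀ hNR]
    calc ∑ z, H z b ≤ ∑ _z : Fin N, HG := Finset.sum_le_sum fun z _ => hHle z b
      _ = (N:ℝ) * HG := by
          rw [Finset.sum_const, Finset.card_univ, Fintype.card_fin, nsmul_eq_mul]
      _ = HG * (N:ℝ) := mul_comm _ _
  have hggle : ∀ a b, gg N H HG a b ≤ HG + HG/2 := by
    intro a b
    unfold gg
    have := hHle a b
    have := hBy0 b
    linarith
  have hggd : ∀ a, 0 ≤ gg N H HG a a := by
    intro a
    unfold gg
    rw [hH.1]
    have := hByle a
    linarith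
  have hggineq : ∀ a c, G.Adj a c → gg N H HG a c ≤ gg N H HG a a + gg N H HG c c := by
    intro a c _
    unfold gg
    rw [hH.1, hH.1]
    have h1 := hHle a c
    have h2 := hByle a
    have h3 := hBy0 c
    linarith
  haveI : Nonempty (Fin N) := ⟨⟨0, by omega⟩⟩
  obtain ⟨p, hp⟩ := Finite.exists_max (fun q : Fin N × Fin N => M q.1 q.2 - gg N H HG q.1 q.2)
  obtain ⟨wm, hwm⟩ : ∃ w : ℝ, w = M p.1 p.2 - gg N H HG p.1 p.2 := ⟨_, rfl⟩
  have hWle : ∀ a b : Fin N, M a b - gg N H HG a b ≤ wm := by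
    intro a b
    rw [hwm]
    exact hp (a, b)
  have hmain : wm ≤ 0 := by
    by_contra hpos
    push_neg at hpos
    have aux : ∀ (u0 v0 : Fin N) (w : G.Walk u0 v0),
        M u0 v0 - gg N H HG u0 v0 = wm → False := by
      intro u0 v0 w
      induction w with
      | nil =>
        intro h
        rename_i u
        rw [hMdiag u] at h
        have := hggd u
        linarith
      | @cons a b c hab q ih =>
        intro h
        have hMac : M a c = gg N H HG a c + wm := by linarith
        by_cases hac : a = c
        · subst hac
          rw [hMdiag a] at h
          have := hggd a
          linarith
        · by_cases hadj : G.Adj a c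
          · -- adjacent contradiction
            have hmemc : c ∈ G.neighborFinset a := by
              rwa [SimpleGraph.mem_neighborFinset]
            have hmema : a ∈ G.neighborFinset c := by
              rw [SimpleGraph.mem_neighborFinset]; exact hadj.symm
            have hca : PB N G c a = PB N G a c := PB_symm c a
            -- M equation in erased form
            have hMeq := hMadj a c hadj
            have hMeq' : (PBsum N G a + PBsum N G c - PB N G a c) * M a c
                = 1 + (∑ i ∈ (G.neighborFinset a).erase c, PB N G a i * M i c)
                  + (∑ j ∈ (G.neighborFinset c).erase a, PB N G c j * M a j) := by
              have hexp : (PBsum N G a + PBsum N G c - PB N G a c) * M a c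
                  = M a c - (1 - PBsum N G a - PBsum N G c + PB N G a c) * M a c := by ring
              rw [hexp]
              linarith [hMeq]
            rw [hMac] at hMeq'
            -- g sums, erased form
            have hgA := sum_nbr_gg (HG := HG) hN hH hac
            have hgAe : ∑ i ∈ (G.neighborFinset a).erase c, PB N G a i * gg N H HG i c
                = PBsum N G a * gg N H HG a c - 1/2 - PB N G a c * gg N H HG c c := by
              have := Finset.sum_erase_add (G.neighborFinset a)
                (fun i => PB N G a i * gg N H HG i c) hmemc
              try simp only at this
              linarith [hgA]
            have hgB0 : ∑ j ∈ G.neighborFinset c, PB N G c j * gg N H HG a j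
                = PBsum N G c * gg N H HG a c - 1/2 := by
              have hpt : ∀ j ∈ G.neighborFinset c,
                  PB N G c j * gg N H HG a j = PB N G c j * gg N H HG j a := fun j _ => by
                rw [gg_symm hN hH a j]
              rw [Finset.sum_congr rfl hpt, sum_nbr_gg hN hH (Ne.symm hac),
                gg_symm hN hH c a]
            have hgBe : ∑ j ∈ (G.neighborFinset c).erase a, PB N G c j * gg N H HG a j
                = PBsum N G c * gg N H HG a c - 1/2 - PB N G a c * gg N H HG a a := by
              have := Finset.sum_erase_add (G.neighborFinset c)
                (fun j => PB N G c j * gg N H HG a j) hmema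
              try simp only at this
              rw [hca] at this
              linarith [hgB0]
            -- erased weight sums
            have hsA : ∑ i ∈ (G.neighborFinset a).erase c, PB N G a i
                = PBsum N G a - PB N G a c := by
              have := Finset.sum_erase_add (G.neighborFinset a) (fun i => PB N G a i) hmemc
              try simp only at this
              have h2 : ∑ i ∈ G.neighborFinset a, PB N G a i = PBsum N G a := rfl
              linarith
            have hsB : ∑ j ∈ (G.neighborFinset c).erase a, PB N G c j
                = PBsum N G c - PB N G a c := by
              have := Finset.sum_erase_add (G.neighborFinset c) (fun j => PB N G c j) hmema
              try simp only at this
              rw [hca] at this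
              have h2 : ∑ j ∈ G.neighborFinset c, PB N G c j = PBsum N G c := rfl
              linarith
            -- bounds on erased M sums
            have hboundA : ∑ i ∈ (G.neighborFinset a).erase c, PB N G a i * M i c
                ≤ (∑ i ∈ (G.neighborFinset a).erase c, PB N G a i * gg N H HG i c)
                  + (PBsum N G a - PB N G a c) * wm := by
              have h1 : ∀ i ∈ (G.neighborFinset a).erase c,
                  PB N G a i * M i c ≤ PB N G a i * gg N H HG i c + PB N G a i * wm := by
                intro i _
                have h2 : PB N G a i * (M i c - gg N H HG i c) ≤ PB N G a i * wm :=
                  mul_le_mul_of_nonneg_left (hWle i c) (PB_nonneg (G := G) hN a i)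
                linarith [h2]
              have h3 := Finset.sum_le_sum h1
              rw [Finset.sum_add_distrib, ← Finset.sum_mul, hsA] at h3
              exact h3
            have hboundB : ∑ j ∈ (G.neighborFinset c).erase a, PB N G c j * M a j
                ≤ (∑ j ∈ (G.neighborFinset c).erase a, PB N G c j * gg N H HG a j)
                  + (PBsum N G c - PB N G a c) * wm := by
              have h1 : ∀ j ∈ (G.neighborFinset c).erase a,
                  PB N G c j * M a j ≤ PB N G c j * gg N H HG a j + PB N G c j * wm := by
                intro j _
                have h2 : PB N G c j * (M a j - gg N H HG a j) ≤ PB N G c j * wm :=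
                  mul_le_mul_of_nonneg_left (hWle a j) (PB_nonneg (G := G) hN c j)
                linarith [h2]
              have h3 := Finset.sum_le_sum h1
              rw [Finset.sum_add_distrib, ← Finset.sum_mul, hsB] at h3
              exact h3
            have hkey : PB N G a c * gg N H HG a c
                ≤ PB N G a c * gg N H HG a a + PB N G a c * gg N H HG c c := by
              have := mul_le_mul_of_nonneg_left (hggineq a c hadj)
                (PB_nonneg (G := G) hN a c)
              rw [mul_add] at this
              exact this
            have hEW : 0 < PB N G a c * wm := mul_pos (PB_pos hN hadj) hpos
            have hMexp : PBsum N G a * gg N H HG a c + PBsum N G c * gg N H HG a c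
                  - PB N G a c * gg N H HG a c
                  + PBsum N G a * wm + PBsum N G c * wm - PB N G a c * wm
                = 1 + (∑ i ∈ (G.neighborFinset a).erase c, PB N G a i * M i c)
                  + (∑ j ∈ (G.neighborFinset c).erase a, PB N G c j * M a j) := by
              linear_combination hMeq'
            have hexpA : (PBsum N G a - PB N G a c) * wm
                = PBsum N G a * wm - PB N G a c * wm := by ring
            have hexpB : (PBsum N G c - PB N G a c) * wm
                = PBsum N G c * wm - PB N G a c * wm := by ring
            linarith [hMexp, hexpA, hexpB, hgAe, hgBe, hboundA, hboundB, hkey, hEW]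
          · -- propagation to b
            have hMeq := hMnon a c hac hadj
            have hMeq' : (PBsum N G a + PBsum N G c) * M a c
                = 1 + (∑ i ∈ G.neighborFinset a, PB N G a i * M i c)
                  + (∑ j ∈ G.neighborFinset c, PB N G c j * M a j) := by
              have hexp : (PBsum N G a + PBsum N G c) * M a c
                  = M a c - (1 - PBsum N G a - PBsum N G c) * M a c := by ring
              rw [hexp]
              linarith [hMeq]
            rw [hMac] at hMeq'
            have hgA := sum_nbr_gg (HG := HG) hN hH hac
            have hgB : ∑ j ∈ G.neighborFinset c, PB N G c j * gg N H HG a j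
                = PBsum N G c * gg N H HG a c - 1/2 := by
              have hpt : ∀ j ∈ G.neighborFinset c,
                  PB N G c j * gg N H HG a j = PB N G c j * gg N H HG j a := fun j _ => by
                rw [gg_symm hN hH a j]
              rw [Finset.sum_congr rfl hpt, sum_nbr_gg hN hH (Ne.symm hac),
                gg_symm hN hH c a]
            have hSA : ∑ i ∈ G.neighborFinset a, PB N G a i = PBsum N G a := rfl
            have hSB : ∑ j ∈ G.neighborFinset c, PB N G c j = PBsum N G c := rfl
            have hsumA_eq : ∑ i ∈ G.neighborFinset a,
                PB N G a i * (wm - (M i c - gg N H HG i c))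
                = PBsum N G a * wm - (∑ i ∈ G.neighborFinset a, PB N G a i * M i c)
                  + (PBsum N G a * gg N H HG a c - 1/2) := by
              have hpt : ∀ i ∈ G.neighborFinset a,
                  PB N G a i * (wm - (M i c - gg N H HG i c))
                  = PB N G a i * wm - PB N G a i * M i c + PB N G a i * gg N H HG i c :=
                fun i _ => by ring
              rw [Finset.sum_congr rfl hpt, Finset.sum_add_distrib,
                Finset.sum_sub_distrib, ← Finset.sum_mul, hSA, hgA]
            have hsumB_eq : ∑ j ∈ G.neighborFinset c,
                PB N G c j * (wm - (M a j - gg N H HG a j))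
                = PBsum N G c * wm - (∑ j ∈ G.neighborFinset c, PB N G c j * M a j)
                  + (PBsum N G c * gg N H HG a c - 1/2) := by
              have hpt : ∀ j ∈ G.neighborFinset c,
                  PB N G c j * (wm - (M a j - gg N H HG a j))
                  = PB N G c j * wm - PB N G c j * M a j + PB N G c j * gg N H HG a j :=
                fun j _ => by ring
              rw [Finset.sum_congr rfl hpt, Finset.sum_add_distrib,
                Finset.sum_sub_distrib, ← Finset.sum_mul, hSB, hgB]
            have hA0 : ∀ i ∈ G.neighborFinset a,
                0 ≤ PB N G a i * (wm - (M i c - gg N H HG i c)) := fun i _ =>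
              mul_nonneg (PB_nonneg hN a i) (by linarith [hWle i c])
            have hB0 : ∀ j ∈ G.neighborFinset c,
                0 ≤ PB N G c j * (wm - (M a j - gg N H HG a j)) := fun j _ =>
              mul_nonneg (PB_nonneg hN c j) (by linarith [hWle a j])
            have hBnn : 0 ≤ ∑ j ∈ G.neighborFinset c,
                PB N G c j * (wm - (M a j - gg N H HG a j)) := Finset.sum_nonneg hB0
            have hAnn : 0 ≤ ∑ i ∈ G.neighborFinset a,
                PB N G a i * (wm - (M i c - gg N H HG i c)) := Finset.sum_nonneg hA0
            have htot : (∑ i ∈ G.neighborFinset a,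
                  PB N G a i * (wm - (M i c - gg N H HG i c)))
                + (∑ j ∈ G.neighborFinset c,
                  PB N G c j * (wm - (M a j - gg N H HG a j))) = 0 := by
              linear_combination hsumA_eq + hsumB_eq + hMeq'
            have hAzero : ∑ i ∈ G.neighborFinset a,
                PB N G a i * (wm - (M i c - gg N H HG i c)) = 0 := by
              linarith [htot, hAnn, hBnn]
            have hbmem : b ∈ G.neighborFinset a := by
              rwa [SimpleGraph.mem_neighborFinset]
            have hterm := (Finset.sum_eq_zero_iff_of_nonneg hA0).mp hAzero b hbmem
            have hPBb : 0 < PB N G a b := PB_pos hN hab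
            have hWb : M b c - gg N H HG b c = wm := by
              rcases mul_eq_zero.mp hterm with h1 | h1
              · linarith
              · linarith
            exact ih hWb
    obtain ⟨w⟩ := hG.preconnected p.1 p.2
    exact aux p.1 p.2 w hwm.symm
  have hfin := hWle x y
  have hgle := hggle x y
  linarith
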